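/- arXiv:2211.07253 — 2 statements merged into one kernel-verified Lean document; each statement's English description precedes it below -/
import Mathlib

section
/- Let (Ω, 𝓕, P) be a probability space and let Y : Ω × [0,1] → ℝ be jointly measurable such that for every ω, the path t ↦ Y(ω,t) is càdlàg with Y(ω,0) = Y(ω,1) = 0. For u ∈ (0,1) let θ_u Y denote the cyclically shifted process (θ_u Y)(t) = Y((t+u) mod 1) − Y(u). Assume: (a) for every u ∈ (0,1), θ_u Y has the same finite-dimensional distributions as Y (i.e., for all k and all t₁,…,t_k ∈ [0,1], the random vectors ((θ_u Y)(t₁),…,(θ_u Y)(t_k)) and (Y(t₁),…,Y(t_k)) have the same law); (b) almost surely, Y has a unique infimum point, i.e. there is exactly one ρ ∈ [0,1] with min(Y(ρ−), Y(ρ)) = inf_{s∈[0,1]} Y(s). Let ρ_Y(ω) = inf{ t > 0 : min(Y(ω,t−), Y(ω,t)) = inf_{s∈[0,1]} Y(ω,s) } and let V(Y) denote the Vervaat transform, V(Y)(t) = Y((ρ_Y + t) mod 1) − min(Y(ρ_Y−), Y(ρ_Y)) for t ∈ [0,1). Then ρ_Y is uniformly distributed on [0,1], and ρ_Y is independent of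 V(Y): for every k, all t₁,…,t_k ∈ [0,1), every bounded Borel f : [0,1] → ℝ and every bounded Borel g : ℝ^k → ℝ, E[ f(ρ_Y) · g(V(Y)(t₁),…,V(Y)(t_k)) ] = (∫₀¹ f(u) du) · E[ g(V(Y)(t₁),…,V(Y)(t_k)) ]. -/
open Filter Topology MeasureTheory

/-- Left-limit value of a path on `[0,1]`, with the convention `x(0−) = x(0)`. -/
noncomputable def leftVal (x : ℝ → ℝ) (t : ℝ) : ℝ :=
  if t ≤ 0 then x 0 else limUnder (nhdsWithin t (Set.Iio t)) x

/-- `x : [0,1] → ℝ` is càdlàg: right-continuous on `[0,1)`, left limits on `(0,1]`. -/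
def Cadlag (x : ℝ → ℝ) : Prop :=
  (∀ t ∈ Set.Ico (0 : ℝ) 1, ContinuousWithinAt x (Set.Ici t) t) ∧
  (∀ t ∈ Set.Ioc (0 : ℝ) 1, ∃ L, Filter.Tendsto x (nhdsWithin t (Set.Iio t)) (nhds L))

/-- The infimum of a path over `[0,1]`. -/
noncomputable def runMin01 (y : ℝ → ℝ) : ℝ := ⨅ s : Set.Icc (0 : ℝ) 1, y (s : ℝ)

/-- The first infimum point `ρ_y = inf{t > 0 : min(y(t−), y(t)) = inf_{[0,1]} y}`. -/
noncomputable def infPt (y : ℝ → ℝ) : ℝ :=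
  sInf {t : ℝ | 0 < t ∧ min (leftVal y t) (y t) = runMin01 y}

/-- The Vervaat transform at the splitting point `ρ`:
`V(y)(t) = y((ρ+t) mod 1) − min(y(ρ−), y(ρ))` for `t ∈ [0,1)`. -/
noncomputable def vervaatAux (y : ℝ → ℝ) (ρ : ℝ) (t : ℝ) : ℝ :=
  (if ρ + t ≤ 1 then y (ρ + t) else y (ρ + t - 1)) - min (leftVal y ρ) (y ρ)

namespace Vervaat

open Set

def Good (y : ℝ → ℝ) : Prop :=
  Cadlag y ∧ y 0 = 0 ∧ y 1 = 0 ∧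
    ∃! ρ, ρ ∈ Set.Icc (0:ℝ) 1 ∧ min (leftVal y ρ) (y ρ) = runMin01 y

lemma leftVal_eq_of_tendsto {y : ℝ → ℝ} {t L : ℝ} (ht : 0 < t)
    (h : Tendsto y (𝓝[<] t) (𝓝 L)) : leftVal y t = L := by
  rw [leftVal, if_neg (not_le.mpr ht)]
  exact h.limUnder_eq

lemma runMin01_eq (y : ℝ → ℝ) : runMin01 y = sInf (y '' Set.Icc 0 1) := by
  rw [runMin01, iInf, Set.image_eq_range]

/-- Core subsequence lemma for càdlàg paths. -/
lemma cadlag_subseq {y : ℝ → ℝ} (hy : Cadlag y) {a : ℝ} (ha : 0 < a) (ha1 : a ≤ 1)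
    (s : ℕ → ℝ) (hs : ∀ n, s n ∈ Icc (0:ℝ) a) :
    ∃ σ ∈ Icc (0:ℝ) a, ∃ φ : ℕ → ℕ, StrictMono φ ∧
      (Tendsto (fun k => y (s (φ k))) atTop (𝓝 (y σ)) ∨
       Tendsto (fun k => y (s (φ k))) atTop (𝓝 (leftVal y σ))) := by
  obtain ⟨σ, hσcl, φ, hφ, hlim⟩ :=
    tendsto_subseq_of_bounded (Metric.isBounded_Icc (0:ℝ) a) hs
  rw [(isClosed_Icc (a := (0:ℝ)) (b := a)).closure_eq] at hσcl
  by_cases hfreq : ∃ᶠ k in atTop, σ ≤ s (φ k)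
  · obtain ⟨ψ, hψ, hge⟩ := Filter.extraction_of_frequently_atTop hfreq
    refine ⟨σ, hσcl, φ ∘ ψ, hφ.comp hψ, Or.inl ?_⟩
    by_cases hσ1 : σ < 1
    · have hcw : ContinuousWithinAt y (Set.Ici σ) σ := hy.1 σ ⟨hσcl.1, hσ1⟩
      have htend : Tendsto (fun k => s (φ (ψ k))) atTop (𝓝[≥] σ) := by
        refine tendsto_nhdsWithin_of_tendsto_nhds_of_eventually_within _
          (hlim.comp hψ.tendsto_atTop) (Filter.Eventually.of_forall fun k => hge k)
      exact hcw.tendsto.comp htend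
    · have hσeq : σ = 1 := le_antisymm (hσcl.2.trans ha1) (not_lt.mp hσ1)
      have hconst : ∀ k, s (φ (ψ k)) = σ := fun k =>
        le_antisymm ((hs _).2.trans (ha1.trans hσeq.ge)) (hge k)
      have : (fun k => y (s (φ (ψ k)))) = fun _ => y σ := funext fun k => by rw [hconst k]
      simpa [Function.comp, this] using (tendsto_const_nhds : Tendsto (fun _ : ℕ => y σ) atTop (𝓝 (y σ)))
  · have hev : ∀ᶠ k in atTop, s (φ k) < σ := by
      simpa using (Filter.not_frequently.mp hfreq)
    have hσpos : 0 < σ := by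
      obtain ⟨k, hk⟩ := hev.exists
      exact lt_of_le_of_lt (hs (φ k)).1 hk
    obtain ⟨L, hL⟩ := hy.2 σ ⟨hσpos, hσcl.2.trans ha1⟩
    refine ⟨σ, hσcl, φ, hφ, Or.inr ?_⟩
    rw [leftVal_eq_of_tendsto hσpos hL]
    exact hL.comp (tendsto_nhdsWithin_of_tendsto_nhds_of_eventually_within _ hlim hev)

lemma bddBelow_cadlag {y : ℝ → ℝ} (hy : Cadlag y) {a : ℝ} (ha : 0 < a) (ha1 : a ≤ 1) :
    BddBelow (y '' Icc 0 a) := by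
  by_contra hb
  rw [not_bddBelow_iff] at hb
  have hsel : ∀ n : ℕ, ∃ t ∈ Icc (0:ℝ) a, y t < -n := by
    intro n
    obtain ⟨v, ⟨t, ht, rfl⟩, hv⟩ := hb (-n)
    exact ⟨t, ht, hv⟩
  choose t ht hlt using hsel
  obtain ⟨σ, hσ, φ, hφ, hlim⟩ := cadlag_subseq hy ha ha1 t ht
  have hbot : Tendsto (fun k => y (t (φ k))) atTop atBot := by
    refine tendsto_atBot_mono (fun k => (hlt (φ k)).le) ?_
    have : Tendsto (fun k : ℕ => -((φ k : ℕ) : ℝ)) atTop atBot := by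
      refine tendsto_neg_atBot_iff.mpr ?_
      exact tendsto_natCast_atTop_atTop.comp hφ.tendsto_atTop
    exact this
  rcases hlim with h | h
  · exact not_tendsto_atBot_of_tendsto_nhds h hbot
  · exact not_tendsto_atBot_of_tendsto_nhds h hbot


lemma le_leftVal {y : ℝ → ℝ} (hy : Cadlag y) {σ c : ℝ} (hσ : σ ∈ Ioc (0:ℝ) 1)
    (h : ∀ t ∈ Ioo (0:ℝ) σ, c ≤ y t) : c ≤ leftVal y σ := by
  obtain ⟨L, hL⟩ := hy.2 σ hσ
  rw [leftVal_eq_of_tendsto hσ.1 hL]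
  refine ge_of_tendsto hL ?_
  filter_upwards [Ioo_mem_nhdsLT_of_mem (⟨hσ.1, le_rfl⟩ : σ ∈ Ioc (0:ℝ) σ)] with t ht
  exact h t ht

lemma exists_min_attain {y : ℝ → ℝ} (hy : Cadlag y) {a : ℝ} (ha : 0 < a) (ha1 : a ≤ 1) :
    ∃ σ ∈ Icc (0:ℝ) a, min (leftVal y σ) (y σ) = sInf (y '' Icc 0 a) := by
  set c := sInf (y '' Icc 0 a) with hc
  have hne : (y '' Icc 0 a).Nonempty := ⟨y 0, 0, ⟨le_rfl, ha.le⟩, rfl⟩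
  have hbdd := bddBelow_cadlag hy ha ha1
  have hlb : ∀ t ∈ Icc (0:ℝ) a, c ≤ y t := fun t ht => csInf_le hbdd ⟨t, ht, rfl⟩
  have hsel : ∀ n : ℕ, ∃ t ∈ Icc (0:ℝ) a, y t < c + 1 / (n + 1) := by
    intro n
    have hlt : c < c + 1 / (n + 1) := lt_add_of_pos_right _ (by positivity)
    obtain ⟨v, ⟨t, ht, rfl⟩, hv⟩ := exists_lt_of_csInf_lt hne hlt
    exact ⟨t, ht, hv⟩
  choose t ht hlt using hsel
  obtain ⟨σ, hσ, φ, hφ, hlim⟩ := cadlag_subseq hy ha ha1 t ht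
  have hup : Tendsto (fun k : ℕ => c + 1 / ((φ k : ℝ) + 1)) atTop (𝓝 c) := by
    have h1 : Tendsto (fun k : ℕ => 1 / ((φ k : ℝ) + 1)) atTop (𝓝 0) :=
      tendsto_one_div_add_atTop_nhds_zero_nat.comp hφ.tendsto_atTop
    simpa using tendsto_const_nhds.add h1
  have hsq : Tendsto (fun k => y (t (φ k))) atTop (𝓝 c) := by
    refine tendsto_of_tendsto_of_tendsto_of_le_of_le tendsto_const_nhds hup
      (fun k => hlb _ (ht (φ k))) (fun k => (hlt (φ k)).le)
  have hyσ : c ≤ y σ := hlb σ hσ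
  rcases hlim with h | h
  · have heq : y σ = c := tendsto_nhds_unique h hsq
    refine ⟨σ, hσ, ?_⟩
    rcases eq_or_lt_of_le hσ.1 with h0 | h0
    · rw [← h0] at heq ⊢
      rw [leftVal, if_pos le_rfl, min_self]
      exact heq
    · have hlv : c ≤ leftVal y σ :=
        le_leftVal hy ⟨h0, hσ.2.trans ha1⟩ fun s hs => hlb s ⟨hs.1.le, hs.2.le.trans hσ.2⟩
      rw [heq]; exact min_eq_right hlv
  · have heq : leftVal y σ = c := tendsto_nhds_unique h hsq
    exact ⟨σ, hσ, by rw [heq]; exact min_eq_left hyσ⟩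

lemma good_spec {y : ℝ → ℝ} (hy : Good y) :
    ∃ ρ, ρ ∈ Ioc (0:ℝ) 1 ∧ min (leftVal y ρ) (y ρ) = runMin01 y ∧ infPt y = ρ ∧
      runMin01 y < 0 ∧
      (∀ t, t ∈ Icc (0:ℝ) 1 ∧ min (leftVal y t) (y t) = runMin01 y → t = ρ) ∧
      (∀ t ∈ Icc (0:ℝ) 1, runMin01 y ≤ y t) := by
  obtain ⟨hcad, h0, h1, ρ, ⟨hρmem, hρmin⟩, huni⟩ := hy
  have hbdd := bddBelow_cadlag hcad one_pos le_rfl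
  have hlb : ∀ t ∈ Icc (0:ℝ) 1, runMin01 y ≤ y t := by
    intro t ht; rw [runMin01_eq]; exact csInf_le hbdd ⟨t, ht, rfl⟩
  have hm0 : runMin01 y ≤ 0 := by
    have := hlb 0 ⟨le_rfl, zero_le_one⟩; rw [h0] at this
    exact this
  have hmne : runMin01 y ≠ 0 := by
    intro hm
    have hq0 : (0:ℝ) ∈ Icc (0:ℝ) 1 ∧ min (leftVal y 0) (y 0) = runMin01 y := by
      constructor
      · exact ⟨le_rfl, zero_le_one⟩
      · rw [leftVal, if_pos le_rfl, min_self, h0, hm]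
    have hq1 : (1:ℝ) ∈ Icc (0:ℝ) 1 ∧ min (leftVal y 1) (y 1) = runMin01 y := by
      refine ⟨⟨zero_le_one, le_rfl⟩, ?_⟩
      have hlv : runMin01 y ≤ leftVal y 1 :=
        le_leftVal hcad ⟨one_pos, le_rfl⟩ fun s hs => hlb s ⟨hs.1.le, hs.2.le⟩
      rw [h1, hm]
      exact min_eq_right (by rw [hm] at hlv; exact hlv)
    have e0 := huni 0 hq0
    have e1 := huni 1 hq1
    exact zero_ne_one (e0.trans e1.symm)
  have hmlt : runMin01 y < 0 := lt_of_le_of_ne hm0 hmne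
  have hρpos : 0 < ρ := by
    rcases eq_or_lt_of_le hρmem.1 with h | h
    · exfalso
      rw [← h] at hρmin
      rw [leftVal, if_pos le_rfl, min_self, h0] at hρmin
      exact hmne hρmin.symm
    · exact h
  have hinf : infPt y = ρ := by
    rw [infPt]
    have hmem : ρ ∈ {t : ℝ | 0 < t ∧ min (leftVal y t) (y t) = runMin01 y} := ⟨hρpos, hρmin⟩
    refine le_antisymm (csInf_le ⟨0, fun t ht => ht.1.le⟩ hmem) ?_
    refine le_csInf ⟨ρ, hmem⟩ fun t ht => ?_
    by_cases ht1 : t ≤ 1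
    · exact (huni t ⟨⟨ht.1.le, ht1⟩, ht.2⟩).ge
    · exact hρmem.2.trans (not_le.mp ht1).le
  exact ⟨ρ, ⟨hρpos, hρmem.2⟩, hρmin, hinf, hmlt, fun t htt => huni t ⟨htt.1, htt.2⟩, hlb⟩


noncomputable def shiftPath (u : ℝ) (y : ℝ → ℝ) : ℝ → ℝ :=
  fun t => (if t + u ≤ 1 then y (t + u) else y (t + u - 1)) - y u

section Shift

variable {y : ℝ → ℝ} {u : ℝ}

lemma shiftPath_zero (h1 : y 1 = 0) (hu : u ∈ Ioo (0:ℝ) 1) : shiftPath u y 0 = 0 := by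
  rw [shiftPath, if_pos (by linarith [hu.2] : (0:ℝ) + u ≤ 1)]
  rw [zero_add, sub_self]

lemma shiftPath_one (hu : u ∈ Ioo (0:ℝ) 1) : shiftPath u y 1 = 0 := by
  rw [shiftPath, if_neg (by linarith [hu.1] : ¬ (1:ℝ) + u ≤ 1)]
  rw [show (1:ℝ) + u - 1 = u by ring, sub_self]

lemma tendsto_add_nhdsWithin_Iio (t c : ℝ) :
    Tendsto (fun s => s + c) (𝓝[<] t) (𝓝[<] (t + c)) := by
  refine tendsto_nhdsWithin_of_tendsto_nhds_of_eventually_within _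
    (((continuous_id.add continuous_const).tendsto t).mono_left nhdsWithin_le_nhds) ?_
  filter_upwards [self_mem_nhdsWithin] with s hs
  exact add_lt_add_of_lt_of_le hs (le_refl c)

lemma shift_left_tendsto₁ (hy : Cadlag y) (hu : u ∈ Ioo (0:ℝ) 1) {t : ℝ}
    (ht : 0 < t) (ht2 : t ≤ 1 - u) :
    Tendsto (shiftPath u y) (𝓝[<] t) (𝓝 (leftVal y (t + u) - y u)) := by
  obtain ⟨L, hL⟩ := hy.2 (t + u) ⟨by linarith [hu.1], by linarith⟩
  rw [leftVal_eq_of_tendsto (by linarith [hu.1]) hL]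
  have hmap := tendsto_add_nhdsWithin_Iio t u
  have hbase : Tendsto (fun s => y (s + u) - y u) (𝓝[<] t) (𝓝 (L - y u)) :=
    (hL.comp hmap).sub tendsto_const_nhds
  refine hbase.congr' ?_
  filter_upwards [self_mem_nhdsWithin] with s hs
  rw [shiftPath, if_pos (by simp only [mem_Iio] at hs; linarith : s + u ≤ 1)]

lemma shift_left_tendsto₂ (hy : Cadlag y) (hu : u ∈ Ioo (0:ℝ) 1) {t : ℝ}
    (ht : 1 - u < t) (ht2 : t ≤ 1) :
    Tendsto (shiftPath u y) (𝓝[<] t) (𝓝 (leftVal y (t + u - 1) - y u)) := by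
  obtain ⟨L, hL⟩ := hy.2 (t + u - 1) ⟨by linarith, by linarith [hu.2]⟩
  rw [leftVal_eq_of_tendsto (by linarith) hL]
  have hmap := tendsto_add_nhdsWithin_Iio t (u - 1)
  have hmap' : Tendsto (fun s => s + u - 1) (𝓝[<] t) (𝓝[<] (t + u - 1)) := by
    have : (fun s => s + u - 1) = fun s => s + (u - 1) := by funext s; ring
    rw [this, show t + u - 1 = t + (u - 1) by ring]
    exact hmap
  have hbase : Tendsto (fun s => y (s + u - 1) - y u) (𝓝[<] t) (𝓝 (L - y u)) :=
    (hL.comp hmap').sub tendsto_const_nhds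
  refine hbase.congr' ?_
  filter_upwards [Ioo_mem_nhdsLT_of_mem (⟨ht, le_rfl⟩ : t ∈ Ioc (1 - u) t)] with s hs
  rw [shiftPath, if_neg (by simp only [mem_Ioo] at hs; push_neg; linarith : ¬ s + u ≤ 1)]

lemma shift_leftVal₁ (hy : Cadlag y) (hu : u ∈ Ioo (0:ℝ) 1) {t : ℝ}
    (ht : 0 < t) (ht2 : t ≤ 1 - u) :
    leftVal (shiftPath u y) t = leftVal y (t + u) - y u :=
  leftVal_eq_of_tendsto ht (shift_left_tendsto₁ hy hu ht ht2)

lemma shift_leftVal₂ (hy : Cadlag y) (hu : u ∈ Ioo (0:ℝ) 1) {t : ℝ}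
    (ht : 1 - u < t) (ht2 : t ≤ 1) :
    leftVal (shiftPath u y) t = leftVal y (t + u - 1) - y u :=
  leftVal_eq_of_tendsto (by linarith [hu.2]) (shift_left_tendsto₂ hy hu ht ht2)

lemma shift_cadlag (hy : Cadlag y) (h0 : y 0 = 0) (h1 : y 1 = 0) (hu : u ∈ Ioo (0:ℝ) 1) :
    Cadlag (shiftPath u y) := by
  constructor
  · intro t ht
    rcases lt_trichotomy t (1 - u) with hc | hc | hc
    · -- t < 1 - u
      have hcw := hy.1 (t + u) ⟨by linarith [ht.1, hu.1], by linarith⟩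
      have hmap : Tendsto (fun s => s + u) (𝓝[Ici t] t) (𝓝[Ici (t + u)] (t + u)) := by
        refine tendsto_nhdsWithin_of_tendsto_nhds_of_eventually_within _
          (((continuous_id.add continuous_const).tendsto t).mono_left nhdsWithin_le_nhds) ?_
        filter_upwards [self_mem_nhdsWithin] with s hs
        exact add_le_add hs (le_refl u)
      have hbase : Tendsto (fun s => y (s + u) - y u) (𝓝[Ici t] t) (𝓝 (y (t + u) - y u)) :=
        (hcw.tendsto.comp hmap).sub tendsto_const_nhds
      have hzt : shiftPath u y t = y (t + u) - y u := by
        rw [shiftPath, if_pos (by linarith : t + u ≤ 1)]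
      rw [ContinuousWithinAt, hzt]
      refine hbase.congr' ?_
      have hIio : Iio (1 - u) ∈ 𝓝[Ici t] t :=
        mem_nhdsWithin_of_mem_nhds (Iio_mem_nhds hc)
      filter_upwards [hIio] with s hs
      rw [shiftPath, if_pos (by simp only [mem_Iio] at hs; linarith : s + u ≤ 1)]
    · -- t = 1 - u
      subst hc
      rw [← continuousWithinAt_Ioi_iff_Ici]
      have hcw := hy.1 0 ⟨le_rfl, one_pos⟩
      have hmap : Tendsto (fun s => s + u - 1) (𝓝[Ioi (1 - u)] (1 - u)) (𝓝[Ici 0] 0) := by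
        refine tendsto_nhdsWithin_of_tendsto_nhds_of_eventually_within _ ?_ ?_
        · have : Tendsto (fun s => s + u - 1) (𝓝 (1 - u)) (𝓝 (1 - u + u - 1)) :=
            ((continuous_id.add continuous_const).sub continuous_const).tendsto _
          rw [show 1 - u + u - 1 = 0 by ring] at this
          exact this.mono_left nhdsWithin_le_nhds
        · filter_upwards [self_mem_nhdsWithin] with s hs
          simp only [mem_Ioi] at hs
          simp only [mem_Ici]; linarith
      have hbase : Tendsto (fun s => y (s + u - 1) - y u) (𝓝[Ioi (1 - u)] (1 - u))
          (𝓝 (y 0 - y u)) := (hcw.tendsto.comp hmap).sub tendsto_const_nhds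
      have hzt : shiftPath u y (1 - u) = y 0 - y u := by
        rw [shiftPath, if_pos (by linarith : 1 - u + u ≤ 1), show 1 - u + u = 1 by ring, h1, h0]
      rw [ContinuousWithinAt, hzt]
      refine hbase.congr' ?_
      filter_upwards [self_mem_nhdsWithin] with s hs
      simp only [mem_Ioi] at hs
      rw [shiftPath, if_neg (by push_neg; linarith : ¬ s + u ≤ 1)]
    · -- t > 1 - u
      have hcw := hy.1 (t + u - 1) ⟨by linarith, by linarith [hu.2, ht.2]⟩
      have hmap : Tendsto (fun s => s + u - 1) (𝓝[Ici t] t) (𝓝[Ici (t + u - 1)] (t + u - 1)) := by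
        refine tendsto_nhdsWithin_of_tendsto_nhds_of_eventually_within _ ?_ ?_
        · exact (((continuous_id.add continuous_const).sub continuous_const).tendsto
            t).mono_left nhdsWithin_le_nhds
        · filter_upwards [self_mem_nhdsWithin] with s hs
          simp only [mem_Ici] at hs ⊢; linarith
      have hbase : Tendsto (fun s => y (s + u - 1) - y u) (𝓝[Ici t] t)
          (𝓝 (y (t + u - 1) - y u)) := (hcw.tendsto.comp hmap).sub tendsto_const_nhds
      have hzt : shiftPath u y t = y (t + u - 1) - y u := by
        rw [shiftPath, if_neg (by push_neg; linarith : ¬ t + u ≤ 1)]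
      rw [ContinuousWithinAt, hzt]
      refine hbase.congr' ?_
      filter_upwards [self_mem_nhdsWithin] with s hs
      simp only [mem_Ici] at hs
      rw [shiftPath, if_neg (by push_neg; linarith : ¬ s + u ≤ 1)]
  · intro t ht
    by_cases hc : t ≤ 1 - u
    · exact ⟨_, shift_left_tendsto₁ hy hu ht.1 hc⟩
    · exact ⟨_, shift_left_tendsto₂ hy hu (not_le.mp hc) ht.2⟩


lemma shift_runMin (hy : Good y) (hu : u ∈ Ioo (0:ℝ) 1) :
    runMin01 (shiftPath u y) = runMin01 y - y u := by
  have hcad := hy.1; have h0 := hy.2.1; have h1 := hy.2.2.1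
  obtain ⟨ρ, hρ, hρmin, hinf, hmlt, huni, hlb⟩ := good_spec hy
  rw [runMin01_eq (shiftPath u y)]
  have hub : ∀ v ∈ shiftPath u y '' Icc 0 1, runMin01 y - y u ≤ v := by
    rintro v ⟨t, ht, rfl⟩
    rw [shiftPath]
    by_cases hc : t + u ≤ 1
    · rw [if_pos hc]
      have := hlb (t + u) ⟨by linarith [ht.1, hu.1], hc⟩
      linarith
    · rw [if_neg hc]
      push_neg at hc
      have := hlb (t + u - 1) ⟨by linarith, by linarith [ht.2, hu.2]⟩
      linarith
  have hne : (shiftPath u y '' Icc 0 1).Nonempty := ⟨shiftPath u y 0, 0, ⟨le_rfl, zero_le_one⟩, rfl⟩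
  refine le_antisymm ?_ (le_csInf hne hub)
  refine le_of_forall_pos_le_add fun ε hε => ?_
  have hmem : ∃ v ∈ shiftPath u y '' Icc 0 1, v < runMin01 y - y u + ε := by
    have hlt : runMin01 y < runMin01 y + ε := lt_add_of_pos_right _ hε
    rw [runMin01_eq y] at hlt
    obtain ⟨v, ⟨s, hs, rfl⟩, hv⟩ := exists_lt_of_csInf_lt
      (⟨y 0, 0, ⟨le_rfl, zero_le_one⟩, rfl⟩ : (y '' Icc 0 1).Nonempty) hlt
    rw [← runMin01_eq y] at hv
    rcases le_or_gt u s with hus | hus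
    · refine ⟨shiftPath u y (s - u), ⟨s - u, ⟨by linarith, by linarith [hs.2, hu.1]⟩, rfl⟩, ?_⟩
      rw [shiftPath, if_pos (by linarith [hs.2] : s - u + u ≤ 1), show s - u + u = s by ring]
      linarith
    · rcases eq_or_lt_of_le hs.1 with h0s | h0s
      · refine ⟨shiftPath u y (1 - u), ⟨1 - u, ⟨by linarith [hu.2], by linarith [hu.1]⟩, rfl⟩, ?_⟩
        rw [shiftPath, if_pos (by linarith : 1 - u + u ≤ 1), show 1 - u + u = 1 by ring, h1]
        rw [← h0s, h0] at hv
        linarith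
      · refine ⟨shiftPath u y (s + 1 - u), ⟨s + 1 - u, ⟨by linarith [hu.2], by linarith⟩, rfl⟩, ?_⟩
        rw [shiftPath, if_neg (by push_neg; linarith : ¬ s + 1 - u + u ≤ 1),
          show s + 1 - u + u - 1 = s by ring]
        linarith
  obtain ⟨v, hvmem, hvlt⟩ := hmem
  exact (csInf_le ⟨runMin01 y - y u, hub⟩ hvmem).trans hvlt.le

lemma shift_min_corr (hy : Good y) (hu : u ∈ Ioo (0:ℝ) 1) {t : ℝ} (ht : t ∈ Ioc (0:ℝ) 1) :
    min (leftVal (shiftPath u y) t) (shiftPath u y t) =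
      min (leftVal y (if t ≤ 1 - u then t + u else t + u - 1))
        (y (if t ≤ 1 - u then t + u else t + u - 1)) - y u := by
  have hcad := hy.1
  by_cases hc : t ≤ 1 - u
  · simp only [if_pos hc]
    rw [shift_leftVal₁ hcad hu ht.1 hc, shiftPath, if_pos (by linarith : t + u ≤ 1)]
    exact (min_sub_sub_right _ _ _)
  · push_neg at hc
    simp only [if_neg (not_le.mpr hc)]
    rw [shift_leftVal₂ hcad hu hc ht.2, shiftPath, if_neg (by push_neg; linarith : ¬ t + u ≤ 1)]
    exact (min_sub_sub_right _ _ _)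

lemma shift_good (hy : Good y) (hu : u ∈ Ioo (0:ℝ) 1)
    (hbad : ¬ (infPt y = u ∧ y u = runMin01 y)) :
    Good (shiftPath u y) ∧
      infPt (shiftPath u y) = (if u < infPt y then infPt y - u else infPt y - u + 1) ∧
      runMin01 (shiftPath u y) = runMin01 y - y u := by
  obtain ⟨ρ, hρ, hρmin, hinf, hmlt, huni, hlb⟩ := good_spec hy
  have hcad := hy.1; have h0 := hy.2.1; have h1 := hy.2.2.1
  set z := shiftPath u y with hz
  set σ : ℝ := if u < ρ then ρ - u else ρ - u + 1 with hσdef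
  have hσIoc : σ ∈ Ioc (0:ℝ) 1 := by
    rw [hσdef]; split_ifs with h
    · exact ⟨by linarith, by linarith [hρ.2, hu.1]⟩
    · exact ⟨by linarith [hρ.1, hu.2], by linarith [not_lt.mp h]⟩
  have hw : (if σ ≤ 1 - u then σ + u else σ + u - 1) = ρ := by
    rw [hσdef]; split_ifs with h h2 h2
    · ring
    · exfalso; push_neg at h2; exact h2.not_ge (by linarith [hρ.2])
    · exfalso; have := not_lt.mp h; linarith [hρ.1]
    · ring
  have hmz := shift_runMin hy hu
  have hminσ : min (leftVal z σ) (z σ) = runMin01 z := by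
    rw [shift_min_corr hy hu hσIoc, hw, hρmin, hmz]
  have huniz : ∀ t, t ∈ Icc (0:ℝ) 1 ∧ min (leftVal z t) (z t) = runMin01 z → t = σ := by
    rintro t ⟨htm, htmin⟩
    rcases eq_or_lt_of_le htm.1 with h0t | h0t
    · exfalso
      rw [← h0t] at htmin
      rw [leftVal, if_pos le_rfl, min_self, hz, shiftPath_zero h1 hu, hmz] at htmin
      have hyu : y u = runMin01 y := by linarith
      have humem : u ∈ Icc (0:ℝ) 1 := ⟨hu.1.le, hu.2.le⟩
      have hlvu : runMin01 y ≤ leftVal y u :=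
        le_leftVal hcad ⟨hu.1, hu.2.le⟩ fun s hs => hlb s ⟨hs.1.le, by linarith [hs.2, hu.2]⟩
      have : u = ρ := huni u ⟨humem, by rw [hyu]; exact min_eq_right hlvu⟩
      exact hbad ⟨by rw [hinf, ← this], hyu⟩
    · have hcorr := shift_min_corr ⟨hcad, h0, h1, hy.2.2.2⟩ hu ⟨h0t, htm.2⟩
      rw [htmin, hmz] at hcorr
      have hmin' : min (leftVal y (if t ≤ 1 - u then t + u else t + u - 1))
          (y (if t ≤ 1 - u then t + u else t + u - 1)) = runMin01 y := by linarith
      by_cases hc : t ≤ 1 - u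
      · rw [if_pos hc] at hmin'
        have : t + u = ρ := huni _ ⟨⟨by linarith [hu.1], by linarith⟩, hmin'⟩
        rw [hσdef, if_pos (by linarith : u < ρ)]
        linarith
      · push_neg at hc
        rw [if_neg (not_le.mpr hc)] at hmin'
        have : t + u - 1 = ρ := huni _ ⟨⟨by linarith, by linarith [htm.2, hu.2]⟩, hmin'⟩
        rw [hσdef, if_neg (by push_neg; linarith [htm.2] : ¬ u < ρ)]
        linarith
  have hgoodz : Good z := by
    refine ⟨shift_cadlag hcad h0 h1 hu, shiftPath_zero h1 hu, shiftPath_one hu, σ,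
      ⟨⟨hσIoc.1.le, hσIoc.2⟩, hminσ⟩, ?_⟩
    rintro t ⟨htm, htmin⟩
    exact huniz t ⟨htm, htmin⟩
  have hinfz : infPt z = σ := by
    obtain ⟨ρ', hρ', hρ'min, hinf', _, huni', _⟩ := good_spec hgoodz
    rw [hinf']
    exact huniz ρ' ⟨⟨hρ'.1.le, hρ'.2⟩, hρ'min⟩
  refine ⟨hgoodz, ?_, hmz⟩
  rw [hinfz, hinf]

lemma shift_vervaat (hy : Good y) (hu : u ∈ Ioo (0:ℝ) 1)
    (hbad : ¬ (infPt y = u ∧ y u = runMin01 y)) {t : ℝ} (ht : t ∈ Ico (0:ℝ) 1) :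
    vervaatAux (shiftPath u y) (infPt (shiftPath u y)) t = vervaatAux y (infPt y) t := by
  obtain ⟨hgoodz, hinfz, hmz⟩ := shift_good hy hu hbad
  obtain ⟨ρ, hρ, hρmin, hinf, hmlt, huni, hlb⟩ := good_spec hy
  obtain ⟨ρ', hρ', hρ'min, hinf', _, _, _⟩ := good_spec hgoodz
  set z := shiftPath u y with hzdef
  rw [vervaatAux, vervaatAux, hinf, hρmin]
  rw [hinf'] at hinfz ⊢
  rw [hρ'min, hmz]
  have hσ : ρ' = if u < ρ then ρ - u else ρ - u + 1 := by rw [hinfz, hinf]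
  suffices h : (if ρ' + t ≤ 1 then z (ρ' + t) else z (ρ' + t - 1)) =
      (if ρ + t ≤ 1 then y (ρ + t) else y (ρ + t - 1)) - y u by
    rw [h]; ring
  by_cases hc : u < ρ
  · rw [if_pos hc] at hσ
    by_cases h1c : ρ' + t ≤ 1
    · rw [if_pos h1c, hzdef, shiftPath, show ρ' + t + u = ρ + t by rw [hσ]; ring]
    · rw [if_neg h1c, hzdef, shiftPath, show ρ' + t - 1 + u = ρ + t - 1 by rw [hσ]; ring]
      push_neg at h1c
      rw [if_pos (by linarith [hρ.2, ht.2, hu.1] : ρ + t - 1 ≤ 1)]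
      rw [if_neg (by push_neg; rw [hσ] at h1c; linarith [hu.1] : ¬ ρ + t ≤ 1)]
  · rw [if_neg hc] at hσ
    push_neg at hc
    by_cases h1c : ρ' + t ≤ 1
    · rw [if_pos h1c, hzdef, shiftPath, show ρ' + t + u = ρ + t + 1 by rw [hσ]; ring]
      rw [if_neg (by push_neg; linarith [hρ.1, ht.1] : ¬ ρ + t + 1 ≤ 1)]
      rw [show ρ + t + 1 - 1 = ρ + t by ring]
      rw [if_pos (by rw [hσ] at h1c; linarith [hu.2] : ρ + t ≤ 1)]
    · rw [if_neg h1c, hzdef, shiftPath, show ρ' + t - 1 + u = ρ + t by rw [hσ]; ring]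

end Shift

section Skel

def SQ : Type := {q : ℚ // 0 ≤ q ∧ q ≤ 1}

instance : Countable SQ := Subtype.countable

noncomputable def skel (y : ℝ → ℝ) : SQ → ℝ := fun q => y (q.1 : ℝ)

def oneSQ : SQ := ⟨1, by norm_num⟩

lemma SQ.cast_mem (q : SQ) : ((q.1 : ℝ)) ∈ Icc (0:ℝ) 1 :=
  ⟨by exact_mod_cast q.2.1, by exact_mod_cast q.2.2⟩

variable {y : ℝ → ℝ}

/-- rational approximation of the infimum -/
lemma rat_approx (hy : Good y) {ε : ℝ} (hε : 0 < ε) :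
    ∃ q : SQ, skel y q < runMin01 y + ε := by
  obtain ⟨ρ, hρ, hρmin, hinf, hmlt, huni, hlb⟩ := good_spec hy
  have hcad := hy.1
  have hlt : runMin01 y < runMin01 y + ε := lt_add_of_pos_right _ hε
  rw [runMin01_eq y] at hlt
  obtain ⟨v, ⟨s, hs, rfl⟩, hv⟩ := exists_lt_of_csInf_lt
    (⟨y 0, 0, ⟨le_rfl, zero_le_one⟩, rfl⟩ : (y '' Icc 0 1).Nonempty) hlt
  rw [← runMin01_eq y] at hv
  rcases eq_or_lt_of_le hs.2 with hs1 | hs1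
  · refine ⟨oneSQ, ?_⟩
    have : skel y oneSQ = y s := by rw [skel, oneSQ, hs1]; norm_num
    rw [this]; exact hv
  · have hcw := hcad.1 s ⟨hs.1, hs1⟩
    have hmem : {t : ℝ | y t < runMin01 y + ε} ∈ 𝓝[Ici s] s := hcw (Iio_mem_nhds hv)
    rw [Metric.mem_nhdsWithin_iff] at hmem
    obtain ⟨δ, hδ, hsub⟩ := hmem
    obtain ⟨q, hq1, hq2⟩ := exists_rat_btwn (lt_min (lt_add_of_pos_right s hδ) hs1 :
      s < min (s + δ) 1)
    have hq0 : (0:ℝ) ≤ (q:ℝ) := le_of_lt (lt_of_le_of_lt hs.1 hq1)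
    have hqle : (q:ℝ) ≤ 1 := le_of_lt (lt_of_lt_of_le hq2 (min_le_right _ _))
    refine ⟨⟨q, by exact_mod_cast hq0, by exact_mod_cast hqle⟩, ?_⟩
    have : (q:ℝ) ∈ Metric.ball s δ ∩ Ici s := by
      constructor
      · rw [Metric.mem_ball, Real.dist_eq, abs_of_nonneg (by linarith : (0:ℝ) ≤ (q:ℝ) - s)]
        have := lt_of_lt_of_le hq2 (min_le_left _ _)
        linarith
      · exact hq1.le
    exact hsub this

noncomputable def rhoHat (x : SQ → ℝ) : ℝ :=
  sInf {a : ℝ | ∃ q : SQ, ((q.1 : ℝ)) = a ∧ 0 < q.1 ∧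
    (∀ r : SQ, ∀ ε : ℚ, 0 < ε → ∃ r' : SQ, r'.1 ≤ q.1 ∧ x r' < x r + (ε : ℝ))}

lemma rhoHat_mem_one (x : SQ → ℝ) :
    (1:ℝ) ∈ {a : ℝ | ∃ q : SQ, ((q.1 : ℝ)) = a ∧ 0 < q.1 ∧
      (∀ r : SQ, ∀ ε : ℚ, 0 < ε → ∃ r' : SQ, r'.1 ≤ q.1 ∧ x r' < x r + (ε : ℝ))} := by
  refine ⟨oneSQ, by norm_num [oneSQ], by norm_num [oneSQ], fun r ε hε => ⟨r, r.2.2, ?_⟩⟩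
  have : (0:ℝ) < (ε:ℝ) := by exact_mod_cast hε
  linarith

lemma rhoHat_bddBelow (x : SQ → ℝ) :
    BddBelow {a : ℝ | ∃ q : SQ, ((q.1 : ℝ)) = a ∧ 0 < q.1 ∧
      (∀ r : SQ, ∀ ε : ℚ, 0 < ε → ∃ r' : SQ, r'.1 ≤ q.1 ∧ x r' < x r + (ε : ℝ))} := by
  refine ⟨0, ?_⟩
  rintro a ⟨q, rfl, hq, _⟩
  exact_mod_cast q.2.1

lemma rhoHat_skel (hy : Good y) : rhoHat (skel y) = infPt y := by
  obtain ⟨ρ, hρ, hρmin, hinf, hmlt, huni, hlb⟩ := good_spec hy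
  have hcad := hy.1
  rw [hinf, rhoHat]
  have hset : ∀ q : SQ, (0 < q.1 ∧
      (∀ r : SQ, ∀ ε : ℚ, 0 < ε → ∃ r' : SQ, r'.1 ≤ q.1 ∧ skel y r' < skel y r + (ε : ℝ)))
      ↔ ρ ≤ (q.1 : ℝ) := by
    intro q
    constructor
    · rintro ⟨hq0, hq⟩
      by_contra hqρ
      push_neg at hqρ
      -- sInf over [0, q] equals runMin01 y
      have hq0R : (0:ℝ) < (q.1:ℝ) := by exact_mod_cast hq0
      have hq1R : (q.1:ℝ) ≤ 1 := (SQ.cast_mem q).2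
      have hbddq : BddBelow (y '' Icc 0 (q.1:ℝ)) := bddBelow_cadlag hcad hq0R hq1R
      have hlbq : ∀ v ∈ y '' Icc 0 (q.1:ℝ), runMin01 y ≤ v := by
        rintro v ⟨t, ht, rfl⟩
        exact hlb t ⟨ht.1, ht.2.trans hq1R⟩
      have hcq : sInf (y '' Icc 0 (q.1:ℝ)) = runMin01 y := by
        refine le_antisymm (le_of_forall_pos_le_add fun ε hε => ?_)
          (le_csInf ⟨y 0, 0, ⟨le_rfl, hq0R.le⟩, rfl⟩ hlbq)
        obtain ⟨r, hr⟩ := rat_approx hy (half_pos hε)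
        obtain ⟨ε', hε'1, hε'2⟩ := exists_rat_btwn (half_pos hε)
        have hε'Q : 0 < ε' := by exact_mod_cast hε'1
        obtain ⟨r', hr'le, hr'lt⟩ := hq r ε' hε'Q
        have : y ((r'.1 : ℝ)) < runMin01 y + ε := by
          have := hr'lt.trans_le (by linarith [hr, hε'2.le] : skel y r + (ε':ℝ) ≤ runMin01 y + ε)
          exact this
        refine (csInf_le hbddq ⟨(r'.1:ℝ), ⟨(SQ.cast_mem r').1, by exact_mod_cast hr'le⟩,
          rfl⟩).trans this.le
      obtain ⟨σ, hσmem, hσmin⟩ := exists_min_attain hcad hq0R hq1R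
      rw [hcq] at hσmin
      have : σ = ρ := huni σ ⟨⟨hσmem.1, hσmem.2.trans hq1R⟩, hσmin⟩
      rw [this] at hσmem
      exact absurd hσmem.2 (not_le.mpr hqρ)
    · intro hρq
      have hq0 : 0 < q.1 := by
        have : (0:ℝ) < (q.1:ℝ) := lt_of_lt_of_le hρ.1 hρq
        exact_mod_cast this
      refine ⟨hq0, fun r ε hε => ?_⟩
      have hεR : (0:ℝ) < (ε:ℝ) := by exact_mod_cast hε
      have hxr : runMin01 y ≤ skel y r := hlb _ (SQ.cast_mem r)
      -- find a rational point with value < runMin01 y + ε, located ≤ q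
      suffices h : ∃ r' : SQ, r'.1 ≤ q.1 ∧ y ((r'.1:ℝ)) < runMin01 y + (ε:ℝ) by
        obtain ⟨r', h1, h2⟩ := h
        exact ⟨r', h1, lt_of_lt_of_le h2 (by linarith)⟩
      rcases le_total (leftVal y ρ) (y ρ) with hmm | hmm
      · -- left limit attains the min
        have hLeq : leftVal y ρ = runMin01 y := by rw [← hρmin, min_eq_left hmm]
        obtain ⟨L, hL⟩ := hcad.2 ρ hρ
        have hLV : leftVal y ρ = L := leftVal_eq_of_tendsto hρ.1 hL
        rw [hLV] at hLeq
        rw [hLeq] at hL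
        have hmem : {t : ℝ | y t < runMin01 y + (ε:ℝ)} ∈ 𝓝[<] ρ :=
          hL (Iio_mem_nhds (lt_add_of_pos_right _ hεR))
        rw [Metric.mem_nhdsWithin_iff] at hmem
        obtain ⟨δ, hδ, hsub⟩ := hmem
        obtain ⟨r', hr'1, hr'2⟩ := exists_rat_btwn
          (max_lt (by linarith : ρ - δ < ρ) hρ.1 : max (ρ - δ) 0 < ρ)
        have h0r' : (0:ℝ) ≤ (r':ℝ) := ((le_max_right _ _).trans hr'1.le)
        have hr'le1 : (r':ℝ) ≤ 1 := (hr'2.le.trans hρ.2)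
        refine ⟨⟨r', by exact_mod_cast h0r', by exact_mod_cast hr'le1⟩, ?_, ?_⟩
        · have : (r':ℝ) ≤ (q.1:ℝ) := hr'2.le.trans hρq
          exact_mod_cast this
        · refine hsub ⟨?_, hr'2⟩
          rw [Metric.mem_ball, Real.dist_eq, abs_of_nonpos (by linarith : (r':ℝ) - ρ ≤ 0)]
          have := (le_max_left (ρ - δ) 0).trans_lt hr'1
          linarith
      · -- the value attains the min
        have hVeq : y ρ = runMin01 y := by rw [← hρmin, min_eq_right hmm]
        rcases eq_or_lt_of_le hρq with heq | hlt
        · refine ⟨q, le_rfl, ?_⟩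
          rw [← heq, hVeq]
          linarith
        · have hρ1 : ρ < 1 := lt_of_lt_of_le hlt (SQ.cast_mem q).2
          have hcw := hcad.1 ρ ⟨hρ.1.le, hρ1⟩
          have hvlt : y ρ < runMin01 y + (ε:ℝ) := by rw [hVeq]; linarith
          have hmem : {t : ℝ | y t < runMin01 y + (ε:ℝ)} ∈ 𝓝[Ici ρ] ρ :=
            hcw (Iio_mem_nhds hvlt)
          rw [Metric.mem_nhdsWithin_iff] at hmem
          obtain ⟨δ, hδ, hsub⟩ := hmem
          obtain ⟨r', hr'1, hr'2⟩ := exists_rat_btwn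
            (lt_min (lt_add_of_pos_right ρ hδ) hlt : ρ < min (ρ + δ) (q.1:ℝ))
          have h0r' : (0:ℝ) ≤ (r':ℝ) := (hρ.1.le.trans hr'1.le)
          have hr'leq : (r':ℝ) ≤ (q.1:ℝ) := (hr'2.le.trans (min_le_right _ _))
          refine ⟨⟨r', by exact_mod_cast h0r', by exact_mod_cast hr'leq.trans (SQ.cast_mem q).2⟩,
            by exact_mod_cast hr'leq, ?_⟩
          refine hsub ⟨?_, hr'1.le⟩
          rw [Metric.mem_ball, Real.dist_eq, abs_of_nonneg (by linarith : (0:ℝ) ≤ (r':ℝ) - ρ)]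
          have := lt_of_lt_of_le hr'2 (min_le_left _ _)
          linarith
  -- now compute the sInf
  refine le_antisymm ?_ ?_
  · refine le_of_forall_pos_le_add fun ε hε => ?_
    rcases eq_or_lt_of_le hρ.2 with hρ1 | hρ1
    · refine (csInf_le (rhoHat_bddBelow _) (rhoHat_mem_one (skel y))).trans ?_
      rw [← hρ1]; linarith
    · obtain ⟨q, hq1, hq2⟩ := exists_rat_btwn (lt_min (lt_add_of_pos_right ρ hε) hρ1 :
        ρ < min (ρ + ε) 1)
      have h0q : (0:ℝ) ≤ (q:ℝ) := (hρ.1.le.trans hq1.le)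
      have hq1' : (q:ℝ) ≤ 1 := (hq2.le.trans (min_le_right _ _))
      set q' : SQ := ⟨q, by exact_mod_cast h0q, by exact_mod_cast hq1'⟩ with hq'def
      have hmemq : ρ ≤ ((q'.1:ℝ)) := hq1.le
      have hq'c := (hset q').mpr hmemq
      refine (csInf_le (rhoHat_bddBelow _) ⟨q', rfl, hq'c.1, hq'c.2⟩).trans ?_
      exact hq2.le.trans (min_le_left _ _)
  · refine le_csInf ⟨1, rhoHat_mem_one (skel y)⟩ ?_
    rintro a ⟨q, rfl, hq0, hq⟩
    exact (hset q).mp ⟨hq0, hq⟩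

noncomputable def eQ : ℕ → ℚ := (exists_surjective_nat ℚ).choose

lemma eQ_surj : Function.Surjective eQ := (exists_surjective_nat ℚ).choose_spec

noncomputable def toSQ (q : ℚ) : SQ := if h : 0 ≤ q ∧ q ≤ 1 then ⟨q, h⟩ else oneSQ

lemma toSQ_coe (q : SQ) : toSQ q.1 = q := by
  rw [toSQ]; refine (dif_pos q.2).trans ?_
  -- eta
  rfl

noncomputable def pmin (x : SQ → ℝ) : ℕ → ℝ
  | 0 => x oneSQ
  | n + 1 => min (pmin x n) (x (toSQ (eQ n)))

noncomputable def mHat (x : SQ → ℝ) : ℝ := liminf (fun n => pmin x n) atTop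

lemma pmin_antitone (x : SQ → ℝ) : Antitone (pmin x) := by
  refine antitone_nat_of_succ_le fun n => ?_
  rw [pmin]
  exact min_le_left _ _

lemma pmin_le (x : SQ → ℝ) (q : SQ) : ∃ n, pmin x n ≤ x q := by
  obtain ⟨e, he⟩ := eQ_surj q.1
  refine ⟨e + 1, ?_⟩
  rw [pmin, he, toSQ_coe]
  exact min_le_right _ _

lemma mHat_skel (hy : Good y) : mHat (skel y) = runMin01 y := by
  obtain ⟨ρ, hρ, hρmin, hinf, hmlt, huni, hlb⟩ := good_spec hy
  have hlbn : ∀ n, runMin01 y ≤ pmin (skel y) n := by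
    intro n
    induction n with
    | zero => exact hlb _ (SQ.cast_mem oneSQ)
    | succ n ih =>
      rw [pmin]
      exact le_min ih (hlb _ (SQ.cast_mem _))
  have hbdd : BddBelow (range (pmin (skel y))) := ⟨runMin01 y, by rintro v ⟨n, rfl⟩; exact hlbn n⟩
  have htend : Tendsto (pmin (skel y)) atTop (𝓝 (⨅ n, pmin (skel y) n)) :=
    tendsto_atTop_ciInf (pmin_antitone _) hbdd
  have heq : (⨅ n, pmin (skel y) n) = runMin01 y := by
    refine le_antisymm (le_of_forall_pos_le_add fun ε hε => ?_) (le_ciInf hlbn)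
    obtain ⟨q, hq⟩ := rat_approx hy hε
    obtain ⟨n, hn⟩ := pmin_le (skel y) q
    exact (ciInf_le hbdd n).trans (hn.trans hq.le)
  rw [mHat, htend.liminf_eq, heq]

noncomputable def qupZ (n : ℕ) (k : ℤ) : ℚ := max 0 (min 1 ((k + 1 : ℚ) / 2 ^ n))

lemma qupZ_mem (n : ℕ) (k : ℤ) : 0 ≤ qupZ n k ∧ qupZ n k ≤ 1 :=
  ⟨le_max_left _ _, max_le zero_le_one (min_le_left _ _)⟩

noncomputable def qus (n : ℕ) (s : ℝ) : SQ := ⟨qupZ n ⌊s * 2 ^ n⌋, qupZ_mem _ _⟩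

noncomputable def HHat (x : SQ → ℝ) (s : ℝ) : ℝ :=
  if 1 ≤ s then 0 else liminf (fun n => x (qus n s)) atTop

lemma qus_tendsto {s : ℝ} (hs0 : 0 ≤ s) (hs1 : s < 1) :
    Tendsto (fun n => (((qus n s).1 : ℝ))) atTop (𝓝[Ici s] s) ∧
      ∀ᶠ n in atTop, s < (((qus n s).1 : ℝ)) := by
  have hr : ∀ n : ℕ, s < ((⌊s * 2 ^ n⌋ + 1 : ℚ) / 2 ^ n : ℚ) ∧
      (((⌊s * 2 ^ n⌋ + 1 : ℚ) / 2 ^ n : ℚ) : ℝ) ≤ s + ((2:ℝ) ^ n)⁻¹ := by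
    intro n
    have h2 : (0:ℝ) < 2 ^ n := by positivity
    constructor
    · push_cast
      rw [lt_div_iff₀ h2]
      exact Int.lt_floor_add_one (s * 2 ^ n)
    · push_cast
      rw [div_le_iff₀ h2]
      have := Int.floor_le (s * 2 ^ n)
      have h2' : ((2:ℝ) ^ n)⁻¹ * 2 ^ n = 1 := inv_mul_cancel₀ (ne_of_gt h2)
      nlinarith [Int.floor_le (s * 2 ^ n)]
  have hev : ∀ᶠ n in atTop, (qus n s).1 = ((⌊s * 2 ^ n⌋ + 1 : ℚ) / 2 ^ n : ℚ) := by
    have htend0 : Tendsto (fun n : ℕ => ((2:ℝ) ^ n)⁻¹) atTop (𝓝 0) :=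
      tendsto_inv_atTop_zero.comp (tendsto_pow_atTop_atTop_of_one_lt one_lt_two)
    have hev1 : ∀ᶠ n in atTop, ((2:ℝ) ^ n)⁻¹ < 1 - s :=
      htend0.eventually (eventually_lt_nhds (by linarith : (0:ℝ) < 1 - s))
    filter_upwards [hev1] with n hn
    have h1 : (((⌊s * 2 ^ n⌋ + 1 : ℚ) / 2 ^ n : ℚ) : ℝ) ≤ 1 := by
      refine ((hr n).2.trans ?_)
      linarith
    have h0 : (0:ℚ) ≤ ((⌊s * 2 ^ n⌋ + 1 : ℚ) / 2 ^ n : ℚ) := by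
      have := (hr n).1
      have h0R : (0:ℝ) ≤ (((⌊s * 2 ^ n⌋ + 1 : ℚ) / 2 ^ n : ℚ) : ℝ) := le_of_lt (hs0.trans_lt this)
      exact_mod_cast h0R
    have h1Q : ((⌊s * 2 ^ n⌋ + 1 : ℚ) / 2 ^ n : ℚ) ≤ 1 := by exact_mod_cast h1
    show qupZ n ⌊s * 2 ^ n⌋ = _
    rw [qupZ, min_eq_right h1Q, max_eq_right h0]
  constructor
  · refine tendsto_nhdsWithin_of_tendsto_nhds_of_eventually_within _ ?_ ?_
    · -- squeeze
      have hup : Tendsto (fun n : ℕ => s + ((2:ℝ) ^ n)⁻¹) atTop (𝓝 s) := by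
        have htend0 : Tendsto (fun n : ℕ => ((2:ℝ) ^ n)⁻¹) atTop (𝓝 0) :=
          tendsto_inv_atTop_zero.comp (tendsto_pow_atTop_atTop_of_one_lt one_lt_two)
        simpa using tendsto_const_nhds.add htend0
      refine tendsto_of_tendsto_of_tendsto_of_le_of_le' tendsto_const_nhds hup ?_ ?_
      · filter_upwards [hev] with n hn
        rw [hn]
        exact ((hr n).1).le
      · filter_upwards [hev] with n hn
        rw [hn]
        exact (hr n).2
    · filter_upwards [hev] with n hn
      rw [hn]
      exact mem_Ici.mpr ((hr n).1).le
  · filter_upwards [hev] with n hn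
    rw [hn]
    exact (hr n).1

lemma HHat_skel (hy : Good y) {s : ℝ} (hs : s ∈ Icc (0:ℝ) 1) : HHat (skel y) s = y s := by
  rcases eq_or_lt_of_le hs.2 with h1 | h1
  · rw [HHat, if_pos h1.ge, h1, hy.2.2.1]
  · rw [HHat, if_neg (not_le.mpr h1)]
    have hq := qus_tendsto hs.1 h1
    have hcw := hy.1.1 s ⟨hs.1, h1⟩
    have : Tendsto (fun n => skel y (qus n s)) atTop (𝓝 (y s)) :=
      hcw.tendsto.comp hq.1
    exact this.liminf_eq

noncomputable def VHat (t : ℝ) (x : SQ → ℝ) : ℝ :=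
  (if rhoHat x + t ≤ 1 then HHat x (rhoHat x + t) else HHat x (rhoHat x + t - 1)) - mHat x

lemma VHat_skel (hy : Good y) {t : ℝ} (ht : t ∈ Ico (0:ℝ) 1) :
    VHat t (skel y) = vervaatAux y (infPt y) t := by
  obtain ⟨ρ, hρ, hρmin, hinf, hmlt, huni, hlb⟩ := good_spec hy
  rw [VHat, rhoHat_skel hy, mHat_skel hy, hinf, vervaatAux, hρmin]
  by_cases hc : ρ + t ≤ 1
  · rw [if_pos hc, if_pos hc, HHat_skel hy ⟨by linarith [hρ.1, ht.1], hc⟩]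
  · push_neg at hc
    rw [if_neg (not_le.mpr hc), if_neg (not_le.mpr hc),
      HHat_skel hy ⟨by linarith, by linarith [hρ.2, ht.2]⟩]

section Meas

lemma measurable_ite' {α : Type*} [MeasurableSpace α] {c : α → Prop}
    (hc : MeasurableSet {x | c x}) [∀ x, Decidable (c x)] {f g : α → ℝ}
    (hf : Measurable f) (hg : Measurable g) :
    Measurable fun x => if c x then f x else g x := by
  have h : (fun x => if c x then f x else g x) =
      fun x => if x ∈ {y | c y} then f x else g x := by
    funext x; by_cases h : c x <;> simp [h]
  rw [h]
  exact Measurable.ite hc hf hg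

lemma measurable_rhoHat : Measurable rhoHat := by
  apply measurable_of_Iio
  intro c
  have h : rhoHat ⁻¹' Iio c = ⋃ (q : SQ), ⋃ (_ : ((q.1:ℝ)) < c), ⋃ (_ : 0 < q.1),
      {x : SQ → ℝ | ∀ r : SQ, ∀ ε : ℚ, 0 < ε → ∃ r' : SQ, r'.1 ≤ q.1 ∧ x r' < x r + (ε:ℝ)} := by
    ext x
    simp only [mem_preimage, mem_Iio, mem_iUnion, mem_setOf_eq]
    constructor
    · intro hx
      obtain ⟨a, ⟨q, rfl, hq0, hq⟩, hac⟩ := exists_lt_of_csInf_lt ⟨1, rhoHat_mem_one x⟩ hx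
      exact ⟨q, hac, hq0, hq⟩
    · rintro ⟨q, hqc, hq0, hq⟩
      exact lt_of_le_of_lt (csInf_le (rhoHat_bddBelow x) ⟨q, rfl, hq0, hq⟩) hqc
  rw [h]
  refine MeasurableSet.iUnion fun q => MeasurableSet.iUnion fun _ =>
    MeasurableSet.iUnion fun _ => ?_
  have h2 : {x : SQ → ℝ | ∀ r : SQ, ∀ ε : ℚ, 0 < ε → ∃ r' : SQ, r'.1 ≤ q.1 ∧
      x r' < x r + (ε:ℝ)} =
      ⋂ (r : SQ), ⋂ (ε : ℚ), ⋂ (_ : 0 < ε), ⋃ (r' : SQ), ⋃ (_ : r'.1 ≤ q.1),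
        {x : SQ → ℝ | x r' < x r + (ε:ℝ)} := by
    ext x; simp only [mem_iInter, mem_iUnion, mem_setOf_eq, exists_prop]
  rw [h2]
  refine MeasurableSet.iInter fun r => MeasurableSet.iInter fun ε =>
    MeasurableSet.iInter fun _ => MeasurableSet.iUnion fun r' => MeasurableSet.iUnion fun _ => ?_
  exact measurableSet_lt (measurable_pi_apply r') ((measurable_pi_apply r).add_const _)

lemma measurable_pmin (n : ℕ) : Measurable fun x : SQ → ℝ => pmin x n := by
  induction n with
  | zero => exact measurable_pi_apply _
  | succ n ih =>
    simp only [pmin]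
    exact ih.min (measurable_pi_apply _)

lemma measurable_mHat : Measurable mHat :=
  Measurable.liminf fun n => measurable_pmin n

lemma measurable_pair_eval {β : Type*} [MeasurableSpace β] (j : β → SQ)
    (hj : ∀ i : SQ, MeasurableSet {b | j b = i}) :
    Measurable fun p : (SQ → ℝ) × β => p.1 (j p.2) := by
  intro U hU
  have h : (fun p : (SQ → ℝ) × β => p.1 (j p.2)) ⁻¹' U =
      ⋃ i : SQ, {x : SQ → ℝ | x i ∈ U} ×ˢ {b | j b = i} := by
    ext p
    simp only [mem_preimage, mem_iUnion, mem_prod, mem_setOf_eq]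
    constructor
    · intro h; exact ⟨j p.2, h, rfl⟩
    · rintro ⟨i, hi, hji⟩; rw [hji]; exact hi
  rw [h]
  exact MeasurableSet.iUnion fun i => ((measurable_pi_apply i) hU).prod (hj i)

lemma measurable_qus_fiber (n : ℕ) (i : SQ) : MeasurableSet {s : ℝ | qus n s = i} := by
  have h : {s : ℝ | qus n s = i} =
      (fun s : ℝ => ⌊s * 2 ^ n⌋) ⁻¹' {k : ℤ | (⟨qupZ n k, qupZ_mem n k⟩ : SQ) = i} := rfl
  rw [h]
  exact (Int.measurable_floor.comp (measurable_id.mul_const _))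
    ((Set.to_countable _).measurableSet)

lemma measurable_HHat : Measurable fun p : (SQ → ℝ) × ℝ => HHat p.1 p.2 := by
  have h1 : MeasurableSet {p : (SQ → ℝ) × ℝ | (1:ℝ) ≤ p.2} :=
    measurableSet_le measurable_const measurable_snd
  have h2 : Measurable fun p : (SQ → ℝ) × ℝ => liminf (fun n => p.1 (qus n p.2)) atTop :=
    Measurable.liminf fun n => measurable_pair_eval (qus n) (measurable_qus_fiber n)
  have hite : (fun p : (SQ → ℝ) × ℝ => HHat p.1 p.2) =
      fun p => if (1:ℝ) ≤ p.2 then 0 else liminf (fun n => p.1 (qus n p.2)) atTop := by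
    funext p; rw [HHat]
  rw [hite]
  exact measurable_ite' h1 measurable_const h2

lemma measurable_VHat (t : ℝ) : Measurable (VHat t) := by
  have h1 : Measurable fun x : SQ → ℝ => HHat x (rhoHat x + t) :=
    measurable_HHat.comp (measurable_id.prodMk (measurable_rhoHat.add_const t))
  have h2 : Measurable fun x : SQ → ℝ => HHat x (rhoHat x + t - 1) :=
    measurable_HHat.comp (measurable_id.prodMk ((measurable_rhoHat.add_const t).sub_const 1))
  have hs : MeasurableSet {x : SQ → ℝ | rhoHat x + t ≤ 1} :=
    measurableSet_le (measurable_rhoHat.add_const t) measurable_const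
  exact (measurable_ite' hs h1 h2).sub measurable_mHat

end Meas

end Skel

section Law

variable {Ω : Type*} [MeasurableSpace Ω] {P : Measure Ω} [IsProbabilityMeasure P]
variable {Y : Ω → ℝ → ℝ}

lemma measurable_eval_at (hjm : Measurable (Function.uncurry Y)) (c : ℝ) :
    Measurable fun ω => Y ω c :=
  hjm.comp (measurable_id.prodMk measurable_const)

lemma measurable_skelY (hjm : Measurable (Function.uncurry Y)) :
    Measurable fun ω => skel (Y ω) :=
  measurable_pi_lambda _ fun q => measurable_eval_at hjm _

lemma measurable_skelZ (hjm : Measurable (Function.uncurry Y)) (u : ℝ) :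
    Measurable fun ω => skel (shiftPath u (Y ω)) := by
  apply measurable_pi_lambda
  intro q
  show Measurable fun ω => shiftPath u (Y ω) ((q.1:ℝ))
  simp only [shiftPath]
  by_cases hc : (q.1:ℝ) + u ≤ 1
  · simp only [if_pos hc]; exact (measurable_eval_at hjm _).sub (measurable_eval_at hjm _)
  · simp only [if_neg hc]; exact (measurable_eval_at hjm _).sub (measurable_eval_at hjm _)

lemma law_transfer (hjm : Measurable (Function.uncurry Y)) {u : ℝ} (hu : u ∈ Ioo (0:ℝ) 1)
    (hshift : ∀ k : ℕ, ∀ ts : Fin k → ℝ,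
      (∀ i, ts i ∈ Set.Icc (0 : ℝ) 1) →
      Measure.map (fun ω => fun i =>
          (if ts i + u ≤ 1 then Y ω (ts i + u) else Y ω (ts i + u - 1)) - Y ω u) P =
        Measure.map (fun ω => fun i => Y ω (ts i)) P) :
    Measure.map (fun ω => skel (shiftPath u (Y ω))) P =
      Measure.map (fun ω => skel (Y ω)) P := by
  haveI : IsProbabilityMeasure (Measure.map (fun ω => skel (shiftPath u (Y ω))) P) :=
    Measure.isProbabilityMeasure_map (measurable_skelZ hjm u).aemeasurable
  haveI : IsProbabilityMeasure (Measure.map (fun ω => skel (Y ω)) P) :=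
    Measure.isProbabilityMeasure_map (measurable_skelY hjm).aemeasurable
  have hgen : (inferInstance : MeasurableSpace (SQ → ℝ)) =
      MeasurableSpace.generateFrom (measurableCylinders (fun _ : SQ => ℝ)) :=
    generateFrom_measurableCylinders.symm
  refine ext_of_generate_finite _ hgen isPiSystem_measurableCylinders ?_ (by simp)
  intro s hs
  obtain ⟨t, A, hA, rfl⟩ := (mem_measurableCylinders s).mp hs
  classical
  set k := t.card with hk
  set e : {x // x ∈ t} ≃ Fin k := t.equivFin with he
  set ts : Fin k → ℝ := fun i => (((e.symm i).1.1 : ℚ) : ℝ) with hts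
  have htsmem : ∀ i, ts i ∈ Icc (0:ℝ) 1 := fun i => SQ.cast_mem _
  set ψ : (Fin k → ℝ) → ({x // x ∈ t} → ℝ) := fun v j => v (e j) with hψ
  have hψm : Measurable ψ := measurable_pi_lambda _ fun j => measurable_pi_apply _
  set F₁ : Ω → Fin k → ℝ := fun ω i =>
    (if ts i + u ≤ 1 then Y ω (ts i + u) else Y ω (ts i + u - 1)) - Y ω u with hF₁
  set F₂ : Ω → Fin k → ℝ := fun ω i => Y ω (ts i) with hF₂
  have hF₁m : Measurable F₁ := by
    apply measurable_pi_lambda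
    intro i
    by_cases hc : ts i + u ≤ 1
    · simp only [hF₁, if_pos hc]
      exact (measurable_eval_at hjm _).sub (measurable_eval_at hjm _)
    · simp only [hF₁, if_neg hc]
      exact (measurable_eval_at hjm _).sub (measurable_eval_at hjm _)
  have hF₂m : Measurable F₂ := measurable_pi_lambda _ fun i => measurable_eval_at hjm _
  have hmapeq := hshift k ts htsmem
  have hc1 : (fun ω => Finset.restrict t (skel (shiftPath u (Y ω)))) = ψ ∘ F₁ := by
    funext ω j
    show shiftPath u (Y ω) (((j.1.1 : ℚ) : ℝ)) = F₁ ω (e j)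
    simp only [hF₁, hts, Equiv.symm_apply_apply]
    rfl
  have hc2 : (fun ω => Finset.restrict t (skel (Y ω))) = ψ ∘ F₂ := by
    funext ω j
    show Y ω (((j.1.1 : ℚ) : ℝ)) = F₂ ω (e j)
    simp only [hF₂, hts, Equiv.symm_apply_apply]
  have hcylm : MeasurableSet (cylinder t A) := MeasurableSet.cylinder (α := fun _ : SQ => ℝ) t hA
  rw [Measure.map_apply (measurable_skelZ hjm u) hcylm,
    Measure.map_apply (measurable_skelY hjm) hcylm]
  have hpre1 : (fun ω => skel (shiftPath u (Y ω))) ⁻¹' cylinder t A = (ψ ∘ F₁) ⁻¹' A := by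
    rw [cylinder, ← preimage_comp, ← hc1]; rfl
  have hpre2 : (fun ω => skel (Y ω)) ⁻¹' cylinder t A = (ψ ∘ F₂) ⁻¹' A := by
    rw [cylinder, ← preimage_comp, ← hc2]; rfl
  rw [hpre1, hpre2,
    ← Measure.map_apply (hψm.comp hF₁m) hA, ← Measure.map_apply (hψm.comp hF₂m) hA,
    ← Measure.map_map hψm hF₁m, ← Measure.map_map hψm hF₂m, hmapeq]

end Law

section Circ

lemma interval_integrable_of_bounded {f : ℝ → ℝ} (hf : Measurable f) {C : ℝ}
    (hfb : ∀ v, |f v| ≤ C) (a b : ℝ) : IntervalIntegrable f volume a b := by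
  rw [intervalIntegrable_iff]
  constructor
  · exact hf.aestronglyMeasurable.restrict
  · refine HasFiniteIntegral.restrict_of_bounded (C := C) ?_ ?_
    · exact measure_Ioc_lt_top
    · exact ae_of_all _ fun v => by rw [Real.norm_eq_abs]; exact hfb v

lemma circ_integral {f : ℝ → ℝ} (hf : Measurable f) {C : ℝ} (hfb : ∀ v, |f v| ≤ C)
    {r : ℝ} (hr : r ∈ Ioc (0:ℝ) 1) :
    ∫ u in Ioo (0:ℝ) 1, f (if u < r then r - u else r - u + 1) =
      ∫ v in Icc (0:ℝ) 1, f v := by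
  have hii : ∀ a b : ℝ, IntervalIntegrable f volume a b := interval_integrable_of_bounded hf hfb
  set F : ℝ → ℝ := fun u => f (if u < r then r - u else r - u + 1) with hF
  have hFmeas : Measurable F := by
    refine hf.comp ?_
    refine measurable_ite' (measurableSet_lt measurable_id measurable_const) ?_ ?_
    · exact measurable_const.sub measurable_id
    · exact (measurable_const.sub measurable_id).add_const 1
  have hFb : ∀ v, |F v| ≤ C := fun v => hfb _
  have hFint : ∀ s : Set ℝ, volume s < ⊤ → IntegrableOn F s volume := by
    intro s hs
    refine ⟨hFmeas.aestronglyMeasurable.restrict, ?_⟩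
    refine HasFiniteIntegral.restrict_of_bounded (C := C) hs ?_
    exact ae_of_all _ fun v => by rw [Real.norm_eq_abs]; exact hFb v
  have hsplit : Ioo (0:ℝ) 1 = Ioo 0 r ∪ Ico r 1 := by
    ext v; simp only [mem_Ioo, mem_union, mem_Ico]
    constructor
    · rintro ⟨h1, h2⟩
      rcases lt_or_ge v r with h | h
      · exact Or.inl ⟨h1, h⟩
      · exact Or.inr ⟨h, h2⟩
    · rintro (⟨h1, h2⟩ | ⟨h1, h2⟩)
      · exact ⟨h1, h2.trans_le hr.2⟩
      · exact ⟨hr.1.trans_le h1, h2⟩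
  have hdisj : Disjoint (Ioo (0:ℝ) r) (Ico r 1) := by
    refine disjoint_left.mpr ?_
    rintro v ⟨_, h2⟩ ⟨h3, _⟩
    exact absurd h3 (not_le.mpr h2)
  rw [hsplit, setIntegral_union hdisj measurableSet_Ico
    (hFint _ measure_Ioo_lt_top) (hFint _ measure_Ico_lt_top)]
  have hpiece1 : ∫ u in Ioo (0:ℝ) r, F u = ∫ u in (0:ℝ)..r, f u := by
    rw [setIntegral_congr_fun measurableSet_Ioo
      (fun u hu => by rw [hF]; simp only; rw [if_pos hu.2] : EqOn F (fun u => f (r - u)) (Ioo 0 r))]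
    rw [← integral_Ioc_eq_integral_Ioo, ← intervalIntegral.integral_of_le hr.1.le]
    rw [intervalIntegral.integral_comp_sub_left f r]
    norm_num
  have hpiece2 : ∫ u in Ico r 1, F u = ∫ u in r..(1:ℝ), f u := by
    rw [setIntegral_congr_fun measurableSet_Ico
      (fun u hu => by rw [hF]; simp only; rw [if_neg (not_lt.mpr hu.1)]; ring_nf :
        EqOn F (fun u => f (r + 1 - u)) (Ico r 1))]
    rw [integral_Ico_eq_integral_Ioo, ← integral_Ioc_eq_integral_Ioo,
      ← intervalIntegral.integral_of_le hr.2]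
    rw [intervalIntegral.integral_comp_sub_left f (r + 1)]
    norm_num
  rw [hpiece1, hpiece2,
    intervalIntegral.integral_add_adjacent_intervals (hii 0 r) (hii r 1)]
  rw [integral_Icc_eq_integral_Ioc, ← intervalIntegral.integral_of_le zero_le_one]

end Circ

end Vervaat


open Vervaat in
/-- If `Y` is a jointly measurable process with càdlàg paths vanishing at `0` and `1`,
whose cyclic shifts all have the same finite-dimensional distributions as `Y`, and which
a.s. has a unique infimum point, then `ρ_Y` is uniform on `[0,1]` and independent of the
Vervaat transform `V(Y)`. -/
theorem stmt15 {Ω : Type*} [MeasurableSpace Ω] (P : Measure Ω) [IsProbabilityMeasure P]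
    (Y : Ω → ℝ → ℝ)
    (hjm : Measurable (Function.uncurry Y))
    (hcad : ∀ ω, Cadlag (Y ω))
    (h01 : ∀ ω, Y ω 0 = 0 ∧ Y ω 1 = 0)
    (hshift : ∀ u ∈ Set.Ioo (0 : ℝ) 1, ∀ k : ℕ, ∀ ts : Fin k → ℝ,
      (∀ i, ts i ∈ Set.Icc (0 : ℝ) 1) →
      Measure.map (fun ω => fun i =>
          (if ts i + u ≤ 1 then Y ω (ts i + u) else Y ω (ts i + u - 1)) - Y ω u) P =
        Measure.map (fun ω => fun i => Y ω (ts i)) P)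
    (huniq : ∀ᵐ ω ∂P, ∃! ρ, ρ ∈ Set.Icc (0 : ℝ) 1 ∧
      min (leftVal (Y ω) ρ) (Y ω ρ) = runMin01 (Y ω)) :
    (∀ a ∈ Set.Icc (0 : ℝ) 1, P {ω | infPt (Y ω) ≤ a} = ENNReal.ofReal a) ∧
    (∀ k : ℕ, ∀ ts : Fin k → ℝ, (∀ i, ts i ∈ Set.Ico (0 : ℝ) 1) →
      ∀ f : ℝ → ℝ, Measurable f → (∃ C, ∀ v, |f v| ≤ C) →
      ∀ g : (Fin k → ℝ) → ℝ, Measurable g → (∃ C, ∀ v, |g v| ≤ C) →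
      ∫ ω, f (infPt (Y ω)) * g (fun i => vervaatAux (Y ω) (infPt (Y ω)) (ts i)) ∂P =
        (∫ u in Set.Icc (0 : ℝ) 1, f u) *
          ∫ ω, g (fun i => vervaatAux (Y ω) (infPt (Y ω)) (ts i)) ∂P) := by
  classical
  have hgood : ∀ᵐ ω ∂P, Good (Y ω) :=
    huniq.mono fun ω h => ⟨hcad ω, (h01 ω).1, (h01 ω).2, h⟩
  set R : Ω → ℝ := fun ω => rhoHat (skel (Y ω)) with hRdef
  have hRmeas : Measurable R := measurable_rhoHat.comp (measurable_skelY hjm)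
  have hReq : ∀ᵐ ω ∂P, R ω = infPt (Y ω) := hgood.mono fun ω h => rhoHat_skel h
  have hRIoc : ∀ᵐ ω ∂P, R ω ∈ Set.Ioc (0:ℝ) 1 := by
    filter_upwards [hgood, hReq] with ω h hR
    obtain ⟨ρ, hρ, _, hinf, _⟩ := good_spec h
    rw [hR, hinf]; exact hρ
  have main : ∀ k : ℕ, ∀ ts : Fin k → ℝ, (∀ i, ts i ∈ Set.Ico (0 : ℝ) 1) →
      ∀ f : ℝ → ℝ, Measurable f → (∃ C, ∀ v, |f v| ≤ C) →
      ∀ g : (Fin k → ℝ) → ℝ, Measurable g → (∃ C, ∀ v, |g v| ≤ C) →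
      ∫ ω, f (infPt (Y ω)) * g (fun i => vervaatAux (Y ω) (infPt (Y ω)) (ts i)) ∂P =
        (∫ u in Set.Icc (0 : ℝ) 1, f u) *
          ∫ ω, g (fun i => vervaatAux (Y ω) (infPt (Y ω)) (ts i)) ∂P := by
    intro k ts hts f hfm hfb g hgm hgb
    obtain ⟨Cf, hCf⟩ := hfb
    obtain ⟨Cg, hCg⟩ := hgb
    have hCf0 : 0 ≤ Cf := (abs_nonneg _).trans (hCf 0)
    have hCg0 : 0 ≤ Cg := (abs_nonneg _).trans (hCg 0)
    set G : Ω → ℝ := fun ω => g (fun i => VHat (ts i) (skel (Y ω))) with hGdef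
    have hGmeas : Measurable G :=
      hgm.comp (measurable_pi_lambda _ fun i =>
        (measurable_VHat (ts i)).comp (measurable_skelY hjm))
    have hGae : ∀ᵐ ω ∂P, G ω = g (fun i => vervaatAux (Y ω) (infPt (Y ω)) (ts i)) := by
      filter_upwards [hgood] with ω h
      show g (fun i => VHat (ts i) (skel (Y ω))) = _
      congr 1
      funext i
      exact VHat_skel h (hts i)
    set Φ : (SQ → ℝ) → ℝ :=
      fun x => f (rhoHat x) * g (fun i => VHat (ts i) x) with hΦdef
    have hΦmeas : Measurable Φ :=
      (hfm.comp measurable_rhoHat).mul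
        (hgm.comp (measurable_pi_lambda _ fun i => measurable_VHat (ts i)))
    have hLHS : ∫ ω, f (infPt (Y ω)) * g (fun i => vervaatAux (Y ω) (infPt (Y ω)) (ts i)) ∂P =
        ∫ ω, f (R ω) * G ω ∂P := by
      refine integral_congr_ae ?_
      filter_upwards [hReq, hGae] with ω h1 h2
      rw [h1, h2]
    have hGint : ∫ ω, g (fun i => vervaatAux (Y ω) (infPt (Y ω)) (ts i)) ∂P = ∫ ω, G ω ∂P :=
      integral_congr_ae (hGae.mono fun ω h => h.symm)
    have hD : Set.Countable {v : ℝ | 0 < P {ω | R ω = v}} :=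
      Measure.countable_meas_level_set_pos hRmeas
    have hstepC : ∀ u ∈ Set.Ioo (0:ℝ) 1, P {ω | R ω = u} = 0 →
        ∫ ω, f (if u < R ω then R ω - u else R ω - u + 1) * G ω ∂P =
          ∫ ω, f (R ω) * G ω ∂P := by
      intro u hu hPu
      have hRne : ∀ᵐ ω ∂P, R ω ≠ u := by
        rw [ae_iff]
        have hset : {ω | ¬ R ω ≠ u} = {ω | R ω = u} := by ext ω; simp
        rw [hset]; exact hPu
      have hbadae : ∀ᵐ ω ∂P, ¬ (infPt (Y ω) = u ∧ Y ω u = runMin01 (Y ω)) := by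
        filter_upwards [hRne, hReq] with ω h1 h2
        rintro ⟨h3, _⟩
        exact h1 (h2.trans h3)
      have hzae : ∀ᵐ ω ∂P, Φ (skel (shiftPath u (Y ω))) =
          f (if u < R ω then R ω - u else R ω - u + 1) * G ω := by
        filter_upwards [hgood, hbadae, hReq] with ω hgd hbad hR
        obtain ⟨hgz, hinfz, _⟩ := shift_good hgd hu hbad
        have hfactor1 : f (rhoHat (skel (shiftPath u (Y ω)))) =
            f (if u < R ω then R ω - u else R ω - u + 1) := by
          rw [rhoHat_skel hgz, hinfz, hR]
        have hfactor2 : g (fun i => VHat (ts i) (skel (shiftPath u (Y ω)))) =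
            g (fun i => VHat (ts i) (skel (Y ω))) := by
          congr 1
          funext i
          rw [VHat_skel hgz (hts i), shift_vervaat hgd hu hbad (hts i), VHat_skel hgd (hts i)]
        show f (rhoHat (skel (shiftPath u (Y ω)))) *
            g (fun i => VHat (ts i) (skel (shiftPath u (Y ω)))) = _
        rw [hfactor1, hfactor2]
      have hlaw := law_transfer (P := P) hjm hu (fun k' ts' hts' => hshift u hu k' ts' hts')
      calc ∫ ω, f (if u < R ω then R ω - u else R ω - u + 1) * G ω ∂P
          = ∫ ω, Φ (skel (shiftPath u (Y ω))) ∂P := (integral_congr_ae hzae).symm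
        _ = ∫ x, Φ x ∂(Measure.map (fun ω => skel (shiftPath u (Y ω))) P) :=
            (integral_map (measurable_skelZ hjm u).aemeasurable
              hΦmeas.aestronglyMeasurable).symm
        _ = ∫ x, Φ x ∂(Measure.map (fun ω => skel (Y ω)) P) := by rw [hlaw]
        _ = ∫ ω, Φ (skel (Y ω)) ∂P :=
            integral_map (measurable_skelY hjm).aemeasurable hΦmeas.aestronglyMeasurable
        _ = ∫ ω, f (R ω) * G ω ∂P := rfl
    set J : ℝ → Ω → ℝ := fun u ω => f (if u < R ω then R ω - u else R ω - u + 1) * G ω with hJdef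
    have hJmeas : Measurable (Function.uncurry J) := by
      have h1 : MeasurableSet {p : ℝ × Ω | p.1 < R p.2} :=
        measurableSet_lt measurable_fst (hRmeas.comp measurable_snd)
      have h2 : Measurable fun p : ℝ × Ω =>
          (if p.1 < R p.2 then R p.2 - p.1 else R p.2 - p.1 + 1) :=
        measurable_ite' h1 ((hRmeas.comp measurable_snd).sub measurable_fst)
          (((hRmeas.comp measurable_snd).sub measurable_fst).add_const 1)
      exact (hfm.comp h2).mul (hGmeas.comp measurable_snd)
    haveI hfinIoo : IsFiniteMeasure (volume.restrict (Set.Ioo (0:ℝ) 1)) :=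
      ⟨by rw [Measure.restrict_apply_univ]; exact measure_Ioo_lt_top⟩
    have hJint : Integrable (Function.uncurry J)
        ((volume.restrict (Set.Ioo (0:ℝ) 1)).prod P) := by
      refine ⟨hJmeas.aestronglyMeasurable, ?_⟩
      refine HasFiniteIntegral.of_bounded (C := Cf * Cg) ?_
      refine ae_of_all _ fun p => ?_
      show ‖J p.1 p.2‖ ≤ Cf * Cg
      rw [hJdef]
      rw [Real.norm_eq_abs, abs_mul]
      exact mul_le_mul (hCf _) (hCg _) (abs_nonneg _) hCf0
    have hswap := MeasureTheory.integral_integral_swap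
      (μ := volume.restrict (Set.Ioo (0:ℝ) 1)) (ν := P) (f := J) hJint
    have hDnull : volume {v : ℝ | 0 < P {ω | R ω = v}} = 0 := hD.measure_zero _
    have haeu : ∀ᵐ u ∂volume.restrict (Set.Ioo (0:ℝ) 1),
        ∫ ω, J u ω ∂P = ∫ ω, f (R ω) * G ω ∂P := by
      have h1 : ∀ᵐ u ∂(volume : Measure ℝ), ¬ 0 < P {ω | R ω = u} := by
        rw [ae_iff]
        convert hDnull using 2
        ext v; simp [pos_iff_ne_zero]
      filter_upwards [ae_restrict_of_ae h1, self_mem_ae_restrict measurableSet_Ioo]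
        with u hu1 hu2
      have hPu : P {ω | R ω = u} = 0 := le_zero_iff.mp (not_lt.mp hu1)
      exact hstepC u hu2 hPu
    have hleft : ∫ u in Set.Ioo (0:ℝ) 1, (∫ ω, J u ω ∂P) ∂volume =
        ∫ ω, f (R ω) * G ω ∂P := by
      rw [integral_congr_ae haeu, setIntegral_const]
      simp [Real.volume_Ioo]
    have hright : ∫ ω, (∫ u in Set.Ioo (0:ℝ) 1, J u ω ∂volume) ∂P =
        (∫ u in Set.Icc (0:ℝ) 1, f u) * ∫ ω, G ω ∂P := by
      have hae2 : ∀ᵐ ω ∂P, (∫ u in Set.Ioo (0:ℝ) 1, J u ω ∂volume) =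
          (∫ u in Set.Icc (0:ℝ) 1, f u) * G ω := by
        filter_upwards [hRIoc] with ω hω
        rw [hJdef]
        have : (∫ u in Set.Ioo (0:ℝ) 1,
            f (if u < R ω then R ω - u else R ω - u + 1) * G ω ∂volume) =
            (∫ u in Set.Ioo (0:ℝ) 1,
              f (if u < R ω then R ω - u else R ω - u + 1) ∂volume) * G ω :=
          integral_mul_const _ _
        rw [this, circ_integral hfm hCf hω]
      rw [integral_congr_ae hae2]
      exact integral_const_mul _ _
    rw [hLHS, hGint, ← hleft, hswap, hright]
  refine ⟨?_, main⟩
  intro a ha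
  have hind : Measurable (Set.indicator (Set.Iic a) (fun _ => (1:ℝ))) :=
    measurable_const.indicator measurableSet_Iic
  have hindb : ∀ v, |Set.indicator (Set.Iic a) (fun _ => (1:ℝ)) v| ≤ 1 := by
    intro v
    rw [Set.indicator_apply]
    split_ifs <;> norm_num
  have happ := main 0 (fun i => i.elim0) (fun i => i.elim0)
    (Set.indicator (Set.Iic a) (fun _ => (1:ℝ))) hind ⟨1, hindb⟩
    (fun _ => (1:ℝ)) measurable_const ⟨1, fun v => by norm_num⟩
  simp only [mul_one, integral_const, measure_univ, probReal_univ, ENNReal.toReal_one, one_smul] at happ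
  -- identify LHS with a measure
  have hstep1 : ∫ ω, Set.indicator (Set.Iic a) (fun _ => (1:ℝ)) (infPt (Y ω)) ∂P =
      ∫ ω, Set.indicator (Set.Iic a) (fun _ => (1:ℝ)) (R ω) ∂P := by
    refine integral_congr_ae ?_
    filter_upwards [hReq] with ω h
    rw [h]
  have hstep2 : (fun ω => Set.indicator (Set.Iic a) (fun _ => (1:ℝ)) (R ω)) =
      Set.indicator (R ⁻¹' Set.Iic a) (fun _ => (1:ℝ)) := by
    funext ω
    simp only [Set.indicator_apply, Set.mem_preimage]
  have hstep3 : ∫ ω, Set.indicator (R ⁻¹' Set.Iic a) (fun _ => (1:ℝ)) ω ∂P =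
      (P (R ⁻¹' Set.Iic a)).toReal := by
    rw [integral_indicator_const (1:ℝ) (hRmeas measurableSet_Iic)]
    simp [measureReal_def]
  have hstep4 : ∫ u in Set.Icc (0:ℝ) 1, Set.indicator (Set.Iic a) (fun _ => (1:ℝ)) u = a := by
    rw [integral_indicator measurableSet_Iic]
    rw [Measure.restrict_restrict measurableSet_Iic]
    have hseteq : Set.Iic a ∩ Set.Icc 0 1 = Set.Icc 0 a := by
      ext v
      simp only [Set.mem_inter_iff, Set.mem_Iic, Set.mem_Icc]
      constructor
      · rintro ⟨h1, h2, h3⟩; exact ⟨h2, h1⟩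
      · rintro ⟨h1, h2⟩; exact ⟨h2, h1, h2.trans ha.2⟩
    rw [hseteq, setIntegral_const]
    simp [Real.volume_Icc, ha.1]
  rw [hstep1, hstep2, hstep3, hstep4] at happ
  have hPval : P (R ⁻¹' Set.Iic a) = ENNReal.ofReal a := by
    have hne : P (R ⁻¹' Set.Iic a) ≠ ⊤ := measure_ne_top _ _
    rw [← ENNReal.ofReal_toReal hne, happ]
  have hae : {ω | infPt (Y ω) ≤ a} =ᵐ[P] R ⁻¹' Set.Iic a := by
    refine Filter.eventuallyEq_set.mpr ?_
    filter_upwards [hReq] with ω h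
    simp only [Set.mem_setOf_eq, Set.mem_preimage, Set.mem_Iic]
    rw [h]
  rw [measure_congr hae, hPval]
end

section
/- Let n ≥ 1 and let b : ZMod n → ℝ satisfy Σ_{i ∈ ZMod n} b(i) = 0. Assume that no proper cyclic partial sum of b vanishes: for every r ∈ ZMod n and every k with 1 ≤ k ≤ n−1, Σ_{j=0}^{k−1} b(r + j) ≠ 0. Then there exists exactly one r ∈ ZMod n such that all cyclic partial sums starting at r are nonnegative, i.e. Σ_{j=0}^{k−1} b(r + j) ≥ 0 for every k with 1 ≤ k ≤ n (equivalently, under the hypothesis, such that these partial sums are strictly positive for 1 ≤ k ≤ n−1). -/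
/-- Cycle lemma: if `b : ZMod n → ℝ` has total sum `0` and no proper cyclic partial sum
vanishes, then there is exactly one starting point `r ∈ ZMod n` from which all cyclic
partial sums are nonnegative. -/
theorem stmt17 (n : ℕ) (hn : 1 ≤ n) (b : ZMod n → ℝ)
    (hsum : ∑ j ∈ Finset.range n, b (j : ZMod n) = 0)
    (hne : ∀ r : ZMod n, ∀ k : ℕ, 1 ≤ k → k ≤ n - 1 →
      (∑ j ∈ Finset.range k, b (r + (j : ZMod n))) ≠ 0) :
    ∃! r : ZMod n, ∀ k : ℕ, 1 ≤ k → k ≤ n →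
      0 ≤ ∑ j ∈ Finset.range k, b (r + (j : ZMod n)) := by
  haveI : NeZero n := ⟨by omega⟩
  set f : ℕ → ℝ := fun m => ∑ j ∈ Finset.range m, b (j : ZMod n) with hf
  -- partial sums starting at (m : ZMod n)
  have key : ∀ m k : ℕ, ∑ j ∈ Finset.range k, b ((m : ZMod n) + (j : ZMod n))
      = f (m + k) - f m := by
    intro m k
    induction k with
    | zero => simp
    | succ k ih =>
      rw [Finset.sum_range_succ, ih, show m + (k+1) = (m+k)+1 by ring]
      have h2 : f ((m+k)+1) = f (m+k) + b (((m+k : ℕ) : ZMod n)) := by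
        simp [hf, Finset.sum_range_succ]
      rw [h2]
      push_cast
      ring
  -- range-n sums over a shift are the full sum, hence 0
  have huniv : ∀ g : ZMod n → ℝ,
      ∑ j ∈ Finset.range n, g (j : ZMod n) = ∑ i : ZMod n, g i := by
    intro g
    refine Finset.sum_nbij' (fun j => (j : ZMod n)) (fun i => i.val) ?_ ?_ ?_ ?_ ?_
    · intro a _; exact Finset.mem_univ _
    · intro a _; exact Finset.mem_range.mpr (ZMod.val_lt a)
    · intro a ha; exact ZMod.val_cast_of_lt (Finset.mem_range.mp ha)
    · intro a _; exact ZMod.natCast_rightInverse a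
    · intro a _; rfl
  have shiftsum : ∀ r : ZMod n, ∑ j ∈ Finset.range n, b (r + (j : ZMod n)) = 0 := by
    intro r
    rw [huniv (fun i => b (r + i))]
    have h2 : ∑ i : ZMod n, b (r + i) = ∑ i : ZMod n, b i :=
      Fintype.sum_equiv (Equiv.addLeft r) _ _ (fun i => rfl)
    rw [h2, ← huniv b]
    exact hsum
  -- periodicity of f
  have hper : ∀ m : ℕ, f (m + n) = f m := by
    intro m
    have := key m n
    rw [shiftsum] at this
    linarith
  have hmod : ∀ m : ℕ, f m = f (m % n) := by
    intro m
    induction m using Nat.strong_induction_on with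
    | _ m ih =>
      rcases lt_or_ge m n with h | h
      · rw [Nat.mod_eq_of_lt h]
      · have h1 : f m = f (m - n) := by
          rw [← hper (m - n), show m - n + n = m by omega]
        rw [h1, ih (m - n) (by omega)]
        congr 1
        exact (Nat.mod_eq_sub_mod h).symm
  -- choose the minimizer of f on range n
  obtain ⟨m₀, hm₀mem, hm₀min⟩ :=
    Finset.exists_min_image (Finset.range n) f ⟨0, Finset.mem_range.mpr (by omega)⟩
  have hm₀lt := Finset.mem_range.mp hm₀mem
  -- injectivity of f on range n
  have hinj : ∀ m₁ m₂, m₁ < n → m₂ < n → m₁ ≠ m₂ → f m₁ ≠ f m₂ := by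
    intro m₁ m₂ h1 h2 hne12
    wlog hlt : m₁ < m₂ generalizing m₁ m₂
    · exact fun h => this m₂ m₁ h2 h1 hne12.symm (by omega) h.symm
    intro heq
    have hk := key m₁ (m₂ - m₁)
    rw [show m₁ + (m₂ - m₁) = m₂ by omega, heq, sub_self] at hk
    exact hne (m₁ : ZMod n) (m₂ - m₁) (by omega) (by omega) hk
  -- strict minimality
  have hstrict : ∀ m, m < n → m ≠ m₀ → f m₀ < f m := by
    intro m hm hne'
    exact lt_of_le_of_ne (hm₀min m (Finset.mem_range.mpr hm)) (hinj m₀ m hm₀lt hm (Ne.symm hne'))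
  refine ⟨(m₀ : ZMod n), ?_, ?_⟩
  · intro k hk1 hkn
    rw [key]
    have : f (m₀ + k) = f ((m₀ + k) % n) := hmod _
    rw [this]
    have := hm₀min ((m₀ + k) % n) (Finset.mem_range.mpr (Nat.mod_lt _ (by omega)))
    linarith
  · intro r hr
    have hrval : ((r.val : ℕ) : ZMod n) = r := ZMod.natCast_rightInverse r
    set m' := r.val with hm'
    have hm'lt : m' < n := ZMod.val_lt r
    by_contra hne'
    have hm'ne : m' ≠ m₀ := by
      intro h
      apply hne'
      rw [← hrval, h]
    set k := if m' < m₀ then m₀ - m' else m₀ + n - m' with hkdef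
    have hk1 : 1 ≤ k := by
      rw [hkdef]; split <;> omega
    have hkn1 : k ≤ n - 1 := by
      rw [hkdef]; split <;> omega
    have hmk : f (m' + k) = f m₀ := by
      rw [hmod]
      congr 1
      rw [hkdef]; split
      · rw [Nat.mod_eq_of_lt (by omega)]; omega
      · have : m' + (m₀ + n - m') = m₀ + n := by omega
        rw [this, Nat.add_mod_right, Nat.mod_eq_of_lt (by omega)]
    have hsum' := hr k hk1 (by omega)
    rw [← hrval, key, hmk] at hsum'
    have := hstrict m' hm'lt hm'ne
    linarith
end
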